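/- Let ψ be a positive, trace-preserving ℂ-linear map on M_d(ℂ). Suppose the fixed subspace {X ∈ M_d(ℂ) : ψ(X) = X} has complex dimension at least 2. Then ψ admits a semipositive fixed point: there exists A ∈ M_d(ℂ) with A positive semidefinite, A ≠ 0, det A = 0, and ψ(A) = A. -/

import Mathlib

open Matrix Kronecker
open scoped ComplexOrder

/-- A bipartite matrix on `ℂ^{d₁} ⊗ ℂ^{d₂}` is separable if it is a finite sum of
Kronecker products of positive semidefinite matrices. -/
def MatSep {d₁ d₂ : ℕ} (ρ : Matrix (Fin d₁ × Fin d₂) (Fin d₁ × Fin d₂) ℂ) : Prop :=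
  ∃ (k : ℕ) (A : Fin k → Matrix (Fin d₁) (Fin d₁) ℂ) (B : Fin k → Matrix (Fin d₂) (Fin d₂) ℂ),
    (∀ i, (A i).PosSemidef) ∧ (∀ i, (B i).PosSemidef) ∧ ρ = ∑ i, A i ⊗ₖ B i

namespace Stmt5Aux


set_option linter.unusedSectionVars false
set_option linter.unnecessarySimpa false

variable {n : Type*} [Fintype n] [DecidableEq n]
section decomp
variable {Z : Matrix n n ℂ} (hZ : Z.IsHermitian)

noncomputable def U : Matrix n n ℂ := hZ.eigenvectorUnitary
noncomputable def P : Matrix n n ℂ :=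
  U hZ * diagonal (fun i => ((max (hZ.eigenvalues i) 0 : ℝ) : ℂ)) * (U hZ)ᴴ
noncomputable def N : Matrix n n ℂ :=
  U hZ * diagonal (fun i => ((max (hZ.eigenvalues i) 0 - hZ.eigenvalues i : ℝ) : ℂ)) * (U hZ)ᴴ
noncomputable def Q : Matrix n n ℂ :=
  U hZ * diagonal (fun i => if 0 ≤ hZ.eigenvalues i then (1:ℂ) else 0) * (U hZ)ᴴ

lemma spec : Z = U hZ * diagonal (fun i => ((hZ.eigenvalues i : ℝ) : ℂ)) * (U hZ)ᴴ :=
  hZ.spectral_theorem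

lemma hU1 : (U hZ)ᴴ * U hZ = 1 := by
  rw [← Matrix.star_eq_conjTranspose]
  exact Matrix.mem_unitaryGroup_iff'.mp hZ.eigenvectorUnitary.2

lemma conj_mul (D E : Matrix n n ℂ) :
    (U hZ * D * (U hZ)ᴴ) * (U hZ * E * (U hZ)ᴴ) = U hZ * (D * E) * (U hZ)ᴴ := by
  have h1 := hU1 hZ
  simp only [Matrix.mul_assoc]
  rw [← Matrix.mul_assoc (U hZ)ᴴ (U hZ), h1, Matrix.one_mul]

lemma P_posSemidef : (P hZ).PosSemidef := by
  apply Matrix.PosSemidef.mul_mul_conjTranspose_same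
  exact Matrix.PosSemidef.diagonal fun i => by
    simpa using le_max_right (hZ.eigenvalues i) 0

lemma N_posSemidef : (N hZ).PosSemidef := by
  apply Matrix.PosSemidef.mul_mul_conjTranspose_same
  exact Matrix.PosSemidef.diagonal fun i => by
    simpa [sub_nonneg] using le_max_left (hZ.eigenvalues i) 0

lemma P_sub_N : P hZ - N hZ = Z := by
  conv_rhs => rw [spec hZ]
  rw [P, N, ← Matrix.sub_mul, ← Matrix.mul_sub]
  have hd : ((diagonal fun i => ((max (hZ.eigenvalues i) 0 : ℝ) : ℂ)) -
      diagonal fun i => ((max (hZ.eigenvalues i) 0 - hZ.eigenvalues i : ℝ) : ℂ)) =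
      diagonal fun i => ((hZ.eigenvalues i : ℝ) : ℂ) := by
    ext i j
    rcases eq_or_ne i j with rfl | h
    · simp only [Matrix.sub_apply, Matrix.diagonal_apply_eq]
      push_cast
      ring
    · simp [Matrix.diagonal_apply_ne _ h]
  rw [hd]

lemma Q_mul_P : Q hZ * P hZ = P hZ := by
  rw [Q, P, conj_mul, Matrix.diagonal_mul_diagonal]
  have : (fun i => (if 0 ≤ hZ.eigenvalues i then (1:ℂ) else 0) *
      ((max (hZ.eigenvalues i) 0 : ℝ) : ℂ)) =
      fun i => ((max (hZ.eigenvalues i) 0 : ℝ) : ℂ) := by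
    funext i
    by_cases h : 0 ≤ hZ.eigenvalues i
    · simp [h]
    · simp [h, max_eq_right (le_of_not_ge h)]
  rw [this]

lemma Q_mul_N : Q hZ * N hZ = 0 := by
  rw [Q, N, conj_mul, Matrix.diagonal_mul_diagonal]
  have : (fun i => (if 0 ≤ hZ.eigenvalues i then (1:ℂ) else 0) *
      ((max (hZ.eigenvalues i) 0 - hZ.eigenvalues i : ℝ) : ℂ)) = fun _ => (0:ℂ) := by
    funext i
    by_cases h : 0 ≤ hZ.eigenvalues i
    · simp [h, max_eq_left h]
    · simp [h]
  rw [this]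
  simp

lemma Q_herm : (Q hZ)ᴴ = Q hZ := by
  rw [Q]
  simp only [Matrix.conjTranspose_mul, Matrix.conjTranspose_conjTranspose,
    Matrix.diagonal_conjTranspose, Matrix.mul_assoc]
  have : (star fun i => if 0 ≤ hZ.eigenvalues i then (1:ℂ) else 0) =
      fun i => if 0 ≤ hZ.eigenvalues i then (1:ℂ) else 0 := by
    funext i
    by_cases h : 0 ≤ hZ.eigenvalues i <;> simp [h, Pi.star_apply]
  rw [this]

lemma Q_idem : Q hZ * Q hZ = Q hZ := by
  rw [Q, conj_mul, Matrix.diagonal_mul_diagonal]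
  have : (fun i => (if 0 ≤ hZ.eigenvalues i then (1:ℂ) else 0) *
      (if 0 ≤ hZ.eigenvalues i then (1:ℂ) else 0)) =
      fun i => if 0 ≤ hZ.eigenvalues i then (1:ℂ) else 0 := by
    funext i
    by_cases h : 0 ≤ hZ.eigenvalues i <;> simp [h]
  rw [this]

lemma trace_P : (P hZ).trace = ((∑ i, max (hZ.eigenvalues i) 0 : ℝ) : ℂ) := by
  rw [P, Matrix.trace_mul_cycle, hU1, Matrix.one_mul, Matrix.trace_diagonal]
  push_cast
  rfl

lemma trace_Z_eq : Z.trace = ((∑ i, hZ.eigenvalues i : ℝ) : ℂ) := by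
  conv_lhs => rw [spec hZ]
  rw [Matrix.trace_mul_cycle, hU1, Matrix.one_mul, Matrix.trace_diagonal]
  push_cast
  rfl

lemma det_P_zero {j : n} (hj : hZ.eigenvalues j < 0) : (P hZ).det = 0 := by
  rw [P, Matrix.det_mul, Matrix.det_mul, Matrix.det_diagonal]
  have : ((max (hZ.eigenvalues j) 0 : ℝ) : ℂ) = 0 := by
    simp [max_eq_right hj.le]
  rw [Finset.prod_eq_zero (Finset.mem_univ j) this]
  ring

end decomp

lemma conjTranspose_mul_self_trace_zero {S : Matrix n n ℂ} (h : (Sᴴ * S).trace = 0) :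
    S = 0 := by
  rw [Matrix.trace] at h
  simp only [diag_apply, mul_apply, conjTranspose_apply] at h
  rw [Finset.sum_comm] at h
  have h1 := (Finset.sum_eq_zero_iff_of_nonneg (fun i _ => Finset.sum_nonneg
    (fun j _ => star_mul_self_nonneg (S i j)))).mp h
  ext i j
  have h2 := (Finset.sum_eq_zero_iff_of_nonneg
    (fun j _ => star_mul_self_nonneg (S i j))).mp (h1 i (Finset.mem_univ i)) j (Finset.mem_univ j)
  simpa using congrArg Complex.normSq h2

lemma diag_nonneg {A : Matrix n n ℂ} (hA : A.PosSemidef) (i : n) : 0 ≤ A i i := by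
  exact hA.diag_nonneg

lemma trace_nonneg {A : Matrix n n ℂ} (hA : A.PosSemidef) : 0 ≤ A.trace := by
  rw [Matrix.trace]
  exact Finset.sum_nonneg fun i _ => diag_nonneg hA i

/-- zero compression lemma -/
lemma mul_eq_zero_of_compression {A Q : Matrix n n ℂ} (hA : A.PosSemidef)
    (hQ : Qᴴ = Q) (h : (Q * A * Q).trace = 0) : A * Q = 0 ∧ Q * A = 0 := by
  obtain ⟨S, rfl⟩ : ∃ S : Matrix n n ℂ, A = Sᴴ * S := by
    open scoped MatrixOrder in
    obtain ⟨X, hX, -, hXA⟩ := CFC.exists_sqrt_of_isSelfAdjoint_of_quasispectrumRestricts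
      hA.isHermitian (QuasispectrumRestricts.nnreal_of_nonneg hA.nonneg)
    exact ⟨X, by rw [← hXA, ← Matrix.star_eq_conjTranspose, hX.star_eq]⟩
  have h1 : Q * (Sᴴ * S) * Q = (S * Q)ᴴ * (S * Q) := by
    rw [Matrix.conjTranspose_mul, hQ]
    simp only [Matrix.mul_assoc]
  rw [h1] at h
  have h2 : S * Q = 0 := conjTranspose_mul_self_trace_zero h
  constructor
  · rw [Matrix.mul_assoc, h2, Matrix.mul_zero]
  · have : Q * (Sᴴ * S) = (S * Q)ᴴ * S := by
      rw [Matrix.conjTranspose_mul, hQ, Matrix.mul_assoc]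
    rw [this, h2, Matrix.conjTranspose_zero, Matrix.zero_mul]

lemma compression_trace_eq {A Q : Matrix n n ℂ} (hQi : Q * Q = Q) :
    ((1 - Q) * A * (1 - Q)).trace = A.trace - (Q * A * Q).trace := by
  have e : (1 - Q) * A * (1 - Q) = A - Q * A - A * Q + Q * A * Q := by
    noncomm_ring
  rw [e]
  have h1 : (Q * A * Q).trace = (A * Q).trace := by
    rw [Matrix.mul_assoc, Matrix.trace_mul_comm, Matrix.mul_assoc, hQi]
  have h2 : (Q * A).trace = (A * Q).trace := Matrix.trace_mul_comm _ _
  simp only [Matrix.trace_add, Matrix.trace_sub, h1, h2]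
  ring


section fixed
variable (ψ : Matrix n n ℂ →ₗ[ℂ] Matrix n n ℂ)
    (hpos : ∀ X : Matrix n n ℂ, X.PosSemidef → (ψ X).PosSemidef)
    (htp : ∀ X, (ψ X).trace = X.trace)

include hpos htp in
lemma fixed_P {Z : Matrix n n ℂ} (hZ : Z.IsHermitian) (hfix : ψ Z = Z) :
    ψ (P hZ) = P hZ := by
  have hQH := Q_herm hZ
  have hQi := Q_idem hZ
  have hP := P_posSemidef hZ
  have hN := N_posSemidef hZ
  have hψP := hpos _ hP
  have hψN := hpos _ hN
  have hQP := Q_mul_P hZ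
  have hQN := Q_mul_N hZ
  have hPQ : P hZ * Q hZ = P hZ := by
    have := congrArg Matrix.conjTranspose hQP
    rwa [Matrix.conjTranspose_mul, hQH, hP.1.eq] at this
  have hNQ : N hZ * Q hZ = 0 := by
    have := congrArg Matrix.conjTranspose hQN
    rwa [Matrix.conjTranspose_mul, hQH, hN.1.eq, Matrix.conjTranspose_zero] at this
  have hsub : ψ (P hZ) - ψ (N hZ) = P hZ - N hZ := by
    rw [← map_sub, P_sub_N hZ, hfix]
  set a := (Q hZ * ψ (P hZ) * Q hZ).trace with ha_def
  set b := (Q hZ * ψ (N hZ) * Q hZ).trace with hb_def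
  have hab : a - b = (P hZ).trace := by
    rw [ha_def, hb_def, ← Matrix.trace_sub, ← Matrix.sub_mul, ← Matrix.mul_sub, hsub,
      Matrix.mul_sub, Matrix.sub_mul, hQP, hQN, Matrix.zero_mul, Matrix.trace_sub,
      hPQ, Matrix.trace_zero, sub_zero]
  have hb0 : 0 ≤ b := by
    rw [hb_def]
    apply trace_nonneg
    have := hψN.mul_mul_conjTranspose_same (Q hZ)
    rwa [hQH] at this
  have ha_le : a ≤ (P hZ).trace := by
    have h1 : ((1 - Q hZ) * ψ (P hZ) * (1 - Q hZ)).trace =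
        (ψ (P hZ)).trace - a := compression_trace_eq hQi
    have h2 : 0 ≤ (ψ (P hZ)).trace - a := by
      rw [← h1]
      apply trace_nonneg
      have := hψP.mul_mul_conjTranspose_same (1 - Q hZ)
      rwa [Matrix.conjTranspose_sub, Matrix.conjTranspose_one, hQH] at this
    rw [htp] at h2
    exact sub_nonneg.mp h2
  have hb : b = 0 := by
    rw [← hab] at ha_le
    have h3 : 0 ≤ -b := by simpa [sub_sub_cancel_left] using sub_nonneg.mpr ha_le
    exact le_antisymm (by simpa using h3) hb0
  have ha : a = (P hZ).trace := by rw [← hab, hb, sub_zero]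
  -- ψ N is killed by Q
  obtain ⟨hNQ1, hQN1⟩ := mul_eq_zero_of_compression hψN hQH hb
  -- ψ P is supported on Q
  have hcomp : ((1 - Q hZ) * ψ (P hZ) * (1 - Q hZ)).trace = 0 := by
    rw [compression_trace_eq hQi, htp, ← ha_def, ha, sub_self]
  have h1QH : (1 - Q hZ)ᴴ = 1 - Q hZ := by
    rw [Matrix.conjTranspose_sub, Matrix.conjTranspose_one, hQH]
  obtain ⟨hP1, hP2⟩ := mul_eq_zero_of_compression hψP h1QH hcomp
  have hψPQ : ψ (P hZ) * Q hZ = ψ (P hZ) := by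
    have := hP1
    rw [Matrix.mul_sub, Matrix.mul_one, sub_eq_zero] at this
    exact this.symm
  have hQψP : Q hZ * ψ (P hZ) = ψ (P hZ) := by
    have := hP2
    rw [Matrix.sub_mul, Matrix.one_mul, sub_eq_zero] at this
    exact this.symm
  -- conclude
  have key : ψ (P hZ) = ψ (N hZ) + (P hZ - N hZ) := by
    rw [← hsub]; abel
  calc ψ (P hZ) = Q hZ * ψ (P hZ) * Q hZ := by rw [hQψP, hψPQ]
    _ = Q hZ * (ψ (N hZ) + (P hZ - N hZ)) * Q hZ := by rw [← key]
    _ = Q hZ * ψ (N hZ) * Q hZ + (Q hZ * P hZ * Q hZ - Q hZ * N hZ * Q hZ) := by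
        noncomm_ring
    _ = P hZ := by
        rw [hQN1, hQP, hPQ, hQN]
        simp

end fixed

lemma herm1 (X : Matrix n n ℂ) : ((2⁻¹ : ℂ) • (X + Xᴴ)).IsHermitian := by
  rw [Matrix.IsHermitian, Matrix.conjTranspose_smul, Matrix.conjTranspose_add,
    Matrix.conjTranspose_conjTranspose]
  rw [add_comm]
  norm_num

lemma herm2 (X : Matrix n n ℂ) : ((-Complex.I * 2⁻¹ : ℂ) • (X - Xᴴ)).IsHermitian := by
  rw [Matrix.IsHermitian, Matrix.conjTranspose_smul, Matrix.conjTranspose_sub,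
    Matrix.conjTranspose_conjTranspose]
  have h1 : (star (-Complex.I * 2⁻¹) : ℂ) = Complex.I * 2⁻¹ := by
    simp [Complex.ext_iff]
  rw [h1]
  rw [show Xᴴ - X = -(X - Xᴴ) by abel, smul_neg, ← neg_smul]
  congr 1
  ring

lemma herm_decomp (X : Matrix n n ℂ) :
    (2⁻¹ : ℂ) • (X + Xᴴ) + Complex.I • ((-Complex.I * 2⁻¹ : ℂ) • (X - Xᴴ)) = X := by
  rw [smul_smul]
  have : Complex.I * (-Complex.I * 2⁻¹) = 2⁻¹ := by
    simp [Complex.ext_iff]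
  rw [this, smul_add, smul_sub]
  module

lemma herm_decomp' (X : Matrix n n ℂ) :
    (2⁻¹ : ℂ) • (X + Xᴴ) - Complex.I • ((-Complex.I * 2⁻¹ : ℂ) • (X - Xᴴ)) = Xᴴ := by
  rw [smul_smul]
  have : Complex.I * (-Complex.I * 2⁻¹) = 2⁻¹ := by
    simp [Complex.ext_iff]
  rw [this, smul_add, smul_sub]
  module



section main
variable (ψ : Matrix n n ℂ →ₗ[ℂ] Matrix n n ℂ)
    (hpos : ∀ X : Matrix n n ℂ, X.PosSemidef → (ψ X).PosSemidef)
    (htp : ∀ X, (ψ X).trace = X.trace)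

include hpos htp in
lemma exists_from_fixed {Z : Matrix n n ℂ} (hZ : Z.IsHermitian) (hfix : ψ Z = Z)
    (htr : Z.trace = 0) (hZ0 : Z ≠ 0) :
    ∃ A : Matrix n n ℂ, A.PosSemidef ∧ A ≠ 0 ∧ A.det = 0 ∧ ψ A = A := by
  have hsum : ∑ i, hZ.eigenvalues i = 0 := by
    have h := trace_Z_eq hZ
    rw [htr] at h
    exact_mod_cast h.symm
  have hne : ∃ i, hZ.eigenvalues i ≠ 0 := by
    by_contra h
    push_neg at h
    apply hZ0
    rw [spec hZ]
    have : (fun i => ((hZ.eigenvalues i : ℝ) : ℂ)) = fun _ => (0:ℂ) := by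
      funext i; rw [h i]; simp
    rw [this]
    simp [Matrix.diagonal_zero]
  obtain ⟨i0, hi0⟩ := hne
  have hposev : ∃ i, 0 < hZ.eigenvalues i := by
    by_contra h
    push_neg at h
    have := (Finset.sum_eq_zero_iff_of_nonpos (fun i _ => h i)).mp hsum
    exact hi0 (this i0 (Finset.mem_univ i0))
  have hnegev : ∃ j, hZ.eigenvalues j < 0 := by
    by_contra h
    push_neg at h
    have := (Finset.sum_eq_zero_iff_of_nonneg (fun i _ => h i)).mp hsum
    exact hi0 (this i0 (Finset.mem_univ i0))
  obtain ⟨i, hi⟩ := hposev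
  obtain ⟨j, hj⟩ := hnegev
  refine ⟨P hZ, P_posSemidef hZ, ?_, det_P_zero hZ hj, fixed_P ψ hpos htp hZ hfix⟩
  intro h0
  have htr0 : (P hZ).trace = 0 := by rw [h0, Matrix.trace_zero]
  rw [trace_P hZ] at htr0
  have hr : (∑ k, max (hZ.eigenvalues k) 0 : ℝ) = 0 := by exact_mod_cast htr0
  have hle : max (hZ.eigenvalues i) 0 ≤ ∑ k, max (hZ.eigenvalues k) 0 :=
    Finset.single_le_sum (f := fun k => max (hZ.eigenvalues k) 0)
      (fun k _ => le_max_right _ _) (Finset.mem_univ i)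
  rw [hr, max_eq_left hi.le] at hle
  exact absurd hle (not_le.mpr hi)

include hpos in
lemma psi_herm {H : Matrix n n ℂ} (hH : H.IsHermitian) : (ψ H).IsHermitian := by
  have h : ψ H = ψ (P hH) - ψ (N hH) := by rw [← map_sub, P_sub_N hH]
  rw [h]
  exact ((hpos _ (P_posSemidef hH)).1).sub ((hpos _ (N_posSemidef hH)).1)

include hpos in
lemma psi_conjTranspose (X : Matrix n n ℂ) : ψ Xᴴ = (ψ X)ᴴ := by
  set H1 := (2⁻¹ : ℂ) • (X + Xᴴ) with hH1def
  set H2 := (-Complex.I * 2⁻¹ : ℂ) • (X - Xᴴ) with hH2def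
  have h1 : (ψ H1)ᴴ = ψ H1 := by
    rw [hH1def]; exact (psi_herm ψ hpos (herm1 X)).eq
  have h2 : (ψ H2)ᴴ = ψ H2 := by
    rw [hH2def]; exact (psi_herm ψ hpos (herm2 X)).eq
  have hd : H1 + Complex.I • H2 = X := herm_decomp X
  have hd' : H1 - Complex.I • H2 = Xᴴ := herm_decomp' X
  calc ψ Xᴴ = ψ H1 - Complex.I • ψ H2 := by
        rw [← hd']
        simp only [map_sub, _root_.map_smul]
    _ = (ψ H1 + Complex.I • ψ H2)ᴴ := by
        rw [Matrix.conjTranspose_add, Matrix.conjTranspose_smul, h1, h2,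
          Complex.star_def, Complex.conj_I, neg_smul, ← sub_eq_add_neg]
    _ = (ψ X)ᴴ := by
        conv_rhs => rw [← hd]
        simp only [map_add, _root_.map_smul]

end main
end Stmt5Aux

/-- A positive trace-preserving map whose fixed subspace has dimension at least 2 admits
a semipositive fixed point. -/
theorem stmt_5 (d : ℕ) (ψ : Matrix (Fin d) (Fin d) ℂ →ₗ[ℂ] Matrix (Fin d) (Fin d) ℂ)
    (hpos : ∀ X : Matrix (Fin d) (Fin d) ℂ, X.PosSemidef → (ψ X).PosSemidef)
    (htp : ∀ X, (ψ X).trace = X.trace)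
    (hdim : 2 ≤ Module.finrank ℂ ↥(LinearMap.ker (ψ - LinearMap.id))) :
    ∃ A : Matrix (Fin d) (Fin d) ℂ, A.PosSemidef ∧ A ≠ 0 ∧ A.det = 0 ∧ ψ A = A := by
  classical
  set F := LinearMap.ker (ψ - LinearMap.id) with hF
  let T : F →ₗ[ℂ] ℂ := (Matrix.traceLinearMap (Fin d) ℂ ℂ).comp F.subtype
  have hker : LinearMap.ker T ≠ ⊥ := by
    intro hbot
    have h1 := LinearMap.finrank_range_add_finrank_ker T
    have h2 : Module.finrank ℂ (LinearMap.range T) ≤ 1 := by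
      simpa using Submodule.finrank_le (LinearMap.range T)
    rw [hbot, finrank_bot] at h1
    omega
  obtain ⟨w, hw, hw0⟩ := Submodule.exists_mem_ne_zero_of_ne_bot hker
  set W := (w : Matrix (Fin d) (Fin d) ℂ) with hWdef
  have hWfix : ψ W = W := by
    have h := w.2
    rw [LinearMap.mem_ker, LinearMap.sub_apply, LinearMap.id_apply, sub_eq_zero] at h
    exact h
  have hWtr : W.trace = 0 := by
    have h := LinearMap.mem_ker.mp hw
    simpa [T] using h
  have hW0 : W ≠ 0 := by
    intro h
    exact hw0 (Subtype.ext h)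
  have hWHfix : ψ Wᴴ = Wᴴ := by
    rw [Stmt5Aux.psi_conjTranspose ψ hpos, hWfix]
  have hWHtr : (Wᴴ).trace = 0 := by
    rw [Matrix.trace_conjTranspose, hWtr, star_zero]
  set Z1 := (2⁻¹ : ℂ) • (W + Wᴴ) with hZ1def
  set Z2 := (-Complex.I * 2⁻¹ : ℂ) • (W - Wᴴ) with hZ2def
  have hZ1fix : ψ Z1 = Z1 := by
    rw [hZ1def, _root_.map_smul, map_add, hWfix, hWHfix]
  have hZ2fix : ψ Z2 = Z2 := by
    rw [hZ2def, _root_.map_smul, map_sub, hWfix, hWHfix]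
  have hZ1tr : Z1.trace = 0 := by
    rw [hZ1def, Matrix.trace_smul, Matrix.trace_add, hWtr, hWHtr]
    simp
  have hZ2tr : Z2.trace = 0 := by
    rw [hZ2def, Matrix.trace_smul, Matrix.trace_sub, hWtr, hWHtr]
    simp
  by_cases h1 : Z1 = 0
  · have h2 : Z2 ≠ 0 := by
      intro h2
      apply hW0
      rw [← Stmt5Aux.herm_decomp W, ← hZ1def, ← hZ2def, h1, h2]
      simp
    exact Stmt5Aux.exists_from_fixed ψ hpos htp (Stmt5Aux.herm2 W) hZ2fix hZ2tr h2
  · exact Stmt5Aux.exists_from_fixed ψ hpos htp (Stmt5Aux.herm1 W) hZ1fix hZ1tr h1
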